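/- Let (S, ≤) be a dense semilinear order without maximal or minimal elements in which for all incomparable a, c there is a least common upper bound, and such that for all a < b there exists c with B(a,c,b) strictly between them, and for any two distinct a,b there exists c with B(a,b,c). Then any function f : S → S that preserves B (i.e., B(x,y,z) → B(f x, f y, f z)) is injective. -/
import Mathlib


variable {S : Type*} [PartialOrder S]

/-- Incomparability in a partial order. -/
def Incomp (x y : S) : Prop := ¬ x ≤ y ∧ ¬ y ≤ x

/-- Betweenness relation of a semilinear order. -/
def TreeBtw (a b c : S) : Prop :=
  b ≠ a ∧ b ≠ c ∧
    ((a < b ∧ b ≤ c) ∨ (c < b ∧ b ≤ a) ∨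
      (Incomp a c ∧ a < b ∧ c < b ∧ ∀ d, a < d → c < d → b ≤ d))

/-- In a rich dense semilinear order, any function preserving
betweenness is injective. -/
theorem injective_of_preserves_btw
    (hchain : ∀ x y z : S, x ≤ y → x ≤ z → y ≤ z ∨ z ≤ y)
    (hub : ∀ x y : S, ∃ z, x ≤ z ∧ y ≤ z)
    (hdense : ∀ a b : S, a < b → ∃ c, a < c ∧ c < b)
    (hnomax : ∀ a : S, ∃ b, a < b)
    (hnomin : ∀ a : S, ∃ b, b < a)
    (hlub : ∀ a c : S, Incomp a c → ∃ z, a < z ∧ c < z ∧ ∀ d, a < d → c < d → z ≤ d)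
    (hbet : ∀ a b : S, a < b → ∃ c, TreeBtw a c b)
    (hext : ∀ a b : S, a ≠ b → ∃ c, TreeBtw a b c)
    (f : S → S)
    (hf : ∀ x y z : S, TreeBtw x y z → TreeBtw (f x) (f y) (f z)) :
    Function.Injective f := by
  intro a b hab
  by_contra hne
  obtain ⟨c, hc⟩ := hext a b hne
  exact (hf a b c hc).1 hab.symm
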